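/- arXiv:math/0203051 — 3 statements merged into one kernel-verified Lean document; each statement's English description precedes it below -/
import Mathlib

section
/- There is no family of antiunitary operators J_n on ℂⁿ for n ∈ ℕ such that J_m ⊗ J_n := ϑ ∘ (J_m ⊗ J_n ordinary antilinear tensor product composed with the flip identification ℂ^m ⊗ ℂ^n ≅ ℂ^n ⊗ ℂ^m ≅ ℂ^{mn} via lexicographic ordering) satisfies the strict conjugation requirement J₂ × J₃ = J₃ × J₂ as operators on ℂ⁶. However, defining J_m e_i := e_{m+1−i} on the standard basis gives antiunitary involutions with J_m ⊗ J_n = J_{mn} = J_n ⊗ J_m under the lexicographic identification ℂ^m ⊗ ℂ^n ≅ ℂ^{mn} (where here ⊗ is the ordinary antilinear tensor product without flip). -/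
open scoped ComplexConjugate

/-- Lexicographic identification `ℂ^m ⊗ ℂ^n ≅ ℂ^{mn}`: `e_i ⊗ e_j ↦ e_{(i-1)n+j}`
(0-based: `(i,j) ↦ i·n + j`). -/
def lexF {m n : ℕ} (p : Fin m × Fin n) : Fin (m * n) :=
  ⟨p.1.val * n + p.2.val, by
    calc p.1.val * n + p.2.val < p.1.val * n + n := by omega
      _ = (p.1.val + 1) * n := by ring
      _ ≤ m * n := Nat.mul_le_mul_right n p.1.isLt⟩

/-- Inverse of the lexicographic identification. -/
def unlexF {m n : ℕ} (x : Fin (m * n)) : Fin m × Fin n :=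
  have hn : 0 < n := by
    rcases Nat.eq_zero_or_pos n with h | h
    · exact absurd x.isLt (by subst h; simp)
    · exact h
  (⟨x.val / n, Nat.div_lt_of_lt_mul (Nat.mul_comm m n ▸ x.isLt)⟩,
   ⟨x.val % n, Nat.mod_lt _ hn⟩)

/-- The ordinary antilinear tensor product `A ⊗ B` of antilinear operators,
determined by `(A ⊗ B)(x ⊗ y) = Ax ⊗ By`. -/
noncomputable def tensA {a b c d : Type*} [Fintype a] [DecidableEq a]
    [Fintype c] [DecidableEq c]
    (A : (a → ℂ) → (b → ℂ)) (B : (c → ℂ) → (d → ℂ)) (v : a × c → ℂ) :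
    b × d → ℂ :=
  fun p => ∑ k, ∑ l, A (Pi.single k 1) p.1 * B (Pi.single l 1) p.2 * conj (v (k, l))

/-- The flipped tensor product `ϑ ∘ (A ⊗ B)` used for antilinear arrows. -/
noncomputable def tensAflip {a b c d : Type*} [Fintype a] [DecidableEq a]
    [Fintype c] [DecidableEq c]
    (A : (a → ℂ) → (b → ℂ)) (B : (c → ℂ) → (d → ℂ)) (v : a × c → ℂ) :
    d × b → ℂ :=
  fun p => tensA A B v (p.2, p.1)

/-- The basis-reversing antiunitary `J_m e_i := e_{m+1-i}` on `ℂ^m`. -/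
noncomputable def Jrev (m : ℕ) (v : Fin m → ℂ) : Fin m → ℂ :=
  fun i => conj (v i.rev)


section Helpers
open scoped ComplexConjugate

private lemma expandJ {n : ℕ} (J : (Fin n → ℂ) → (Fin n → ℂ))
    (hadd : ∀ v w, J (v + w) = J v + J w)
    (hsmul : ∀ (c : ℂ) v, J (c • v) = conj c • J v)
    (v : Fin n → ℂ) (p : Fin n) :
    J v p = ∑ k, J (Pi.single k 1) p * conj (v k) := by
  have h0 : J 0 = 0 := by
    have := hadd 0 0
    rw [add_zero] at this
    exact (add_eq_left.mp this.symm)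
  let F : (Fin n → ℂ) →+ (Fin n → ℂ) := ⟨⟨J, h0⟩, hadd⟩
  have hv : v = ∑ i, Pi.single i (v i) := (Finset.univ_sum_single v).symm
  calc J v p = F (∑ i, Pi.single i (v i)) p := by rw [← hv]; rfl
    _ = (∑ i, F (Pi.single i (v i))) p := by rw [map_sum]
    _ = ∑ i, J (Pi.single i (v i)) p := by rw [Finset.sum_apply]; rfl
    _ = ∑ k, J (Pi.single k 1) p * conj (v k) := by
        refine Finset.sum_congr rfl fun i _ => ?_
        have : Pi.single i (v i) = v i • (Pi.single i 1 : Fin n → ℂ) := by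
          rw [← Pi.single_smul, smul_eq_mul, mul_one]
        rw [this, hsmul, Pi.smul_apply, smul_eq_mul, mul_comm]

private lemma tensA_Jrev {m n : ℕ} (w : Fin m × Fin n → ℂ) (p : Fin m × Fin n) :
    tensA (Jrev m) (Jrev n) w p = conj (w (p.1.rev, p.2.rev)) := by
  unfold tensA Jrev
  simp only [Pi.single_apply, apply_ite (conj), map_one, map_zero, ite_mul, mul_ite,
    zero_mul, mul_zero, one_mul, Finset.sum_ite_eq, Finset.mem_univ, if_true]

private lemma idxlem {m n : ℕ} (u : Fin (m * n)) :
    lexF ((unlexF u).1.rev, (unlexF u).2.rev) = u.rev := by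
  have hn : 0 < n := by
    rcases Nat.eq_zero_or_pos n with h | h
    · exact absurd u.isLt (by subst h; simp)
    · exact h
  apply Fin.ext
  simp only [lexF, unlexF, Fin.val_rev]
  have hd : n * (u.val / n) + u.val % n = u.val := Nat.div_add_mod u.val n
  have hd' : u.val / n * n = n * (u.val / n) := Nat.mul_comm _ _
  have hq : u.val / n < m := Nat.div_lt_of_lt_mul (Nat.mul_comm m n ▸ u.isLt)
  have hr : u.val % n < n := Nat.mod_lt _ hn
  have hu : u.val < m * n := u.isLt
  have e1 : (m - (u.val / n + 1)) * n = m * n - n - u.val / n * n := by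
    rw [Nat.sub_mul, Nat.add_mul, one_mul]
    omega
  have e2 : u.val / n * n + n ≤ m * n := by
    have h := Nat.mul_le_mul_right n hq
    rwa [Nat.succ_mul] at h
  omega

end Helpers

/-- (a) There is no family `J_n` of antiunitaries on `ℂ^n` for which the flipped
tensor products (transported to `ℂ⁶` via the lexicographic identifications) satisfy
the strict conjugation requirement `J₂ × J₃ = J₃ × J₂` as operators on `ℂ⁶`.
(b) Nevertheless, `J_m e_i := e_{m+1-i}` defines antiunitary involutions which, for
the *ordinary* antilinear tensor product (without flip) under the lexicographic
identification `ℂ^m ⊗ ℂ^n ≅ ℂ^{mn}`, satisfy `J_m ⊗ J_n = J_{mn} = J_n ⊗ J_m`. -/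
theorem no_strict_flip_conjugation_but_reversal_works :
    -- (a): no such family of antiunitaries
    (¬ ∃ J : (n : ℕ) → (Fin n → ℂ) → (Fin n → ℂ),
      (∀ n, ∀ v w : Fin n → ℂ, J n (v + w) = J n v + J n w) ∧
      (∀ n (c : ℂ) (v : Fin n → ℂ), J n (c • v) = conj c • J n v) ∧
      (∀ n, Function.Bijective (J n)) ∧
      (∀ n, ∀ v w : Fin n → ℂ,
        ∑ i, conj (J n v i) * J n w i = ∑ i, conj (w i) * v i) ∧
      -- `J₂ × J₃ = J₃ × J₂` on `ℂ⁶`, via the lexicographic identifications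
      (∀ (v : Fin 6 → ℂ) (u : Fin 6),
        tensAflip (J 2) (J 3) (fun p => v (lexF p)) (unlexF (m := 3) (n := 2) u) =
        tensAflip (J 3) (J 2) (fun p => v (lexF p)) (unlexF (m := 2) (n := 3) u))) ∧
    -- (b): the reversal antiunitaries
    (∀ m : ℕ,
      (∀ v w : Fin m → ℂ, Jrev m (v + w) = Jrev m v + Jrev m w) ∧
      (∀ (c : ℂ) (v : Fin m → ℂ), Jrev m (c • v) = conj c • Jrev m v) ∧
      (∀ v, Jrev m (Jrev m v) = v) ∧
      (∀ v w : Fin m → ℂ,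
        ∑ i, conj (Jrev m v i) * Jrev m w i = ∑ i, conj (w i) * v i)) ∧
    (∀ m n : ℕ, ∀ (v : Fin (m * n) → ℂ) (u : Fin (m * n)),
      tensA (Jrev m) (Jrev n) (fun p => v (lexF p)) (unlexF u) = Jrev (m * n) v u ∧
      tensA (Jrev n) (Jrev m) (fun p => v (Fin.cast (Nat.mul_comm n m) (lexF p)))
          (unlexF (Fin.cast (Nat.mul_comm m n) u)) = Jrev (m * n) v u) := by
  refine ⟨?_, ?_, ?_⟩
  · -- part (a)
    rintro ⟨J, hadd, hsmul, hbij, hinner, hcomm⟩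
    have E10 : J 2 (Pi.single 0 1) 1 * J 3 (Pi.single 0 1) 0 = J 3 (Pi.single 0 1) 1 * J 2 (Pi.single 0 1) 0 := by
      have h := hcomm (Pi.single ⟨0, by norm_num⟩ 1) ⟨1, by norm_num⟩
      simp only [tensAflip, tensA, unlexF, lexF, Fin.sum_univ_two, Fin.sum_univ_three,
        Pi.single_apply, Fin.mk.injEq] at h
      norm_num at h
      exact h
    have E30 : J 2 (Pi.single 0 1) 1 * J 3 (Pi.single 0 1) 1 = J 3 (Pi.single 0 1) 0 * J 2 (Pi.single 0 1) 1 := by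
      have h := hcomm (Pi.single ⟨0, by norm_num⟩ 1) ⟨3, by norm_num⟩
      simp only [tensAflip, tensA, unlexF, lexF, Fin.sum_univ_two, Fin.sum_univ_three,
        Pi.single_apply, Fin.mk.injEq] at h
      norm_num at h
      exact h
    have E11 : J 2 (Pi.single 0 1) 1 * J 3 (Pi.single 1 1) 0 = J 3 (Pi.single 0 1) 1 * J 2 (Pi.single 1 1) 0 := by
      have h := hcomm (Pi.single ⟨1, by norm_num⟩ 1) ⟨1, by norm_num⟩
      simp only [tensAflip, tensA, unlexF, lexF, Fin.sum_univ_two, Fin.sum_univ_three,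
        Pi.single_apply, Fin.mk.injEq] at h
      norm_num at h
      exact h
    have E12 : J 2 (Pi.single 0 1) 1 * J 3 (Pi.single 2 1) 0 = J 3 (Pi.single 1 1) 1 * J 2 (Pi.single 0 1) 0 := by
      have h := hcomm (Pi.single ⟨2, by norm_num⟩ 1) ⟨1, by norm_num⟩
      simp only [tensAflip, tensA, unlexF, lexF, Fin.sum_univ_two, Fin.sum_univ_three,
        Pi.single_apply, Fin.mk.injEq] at h
      norm_num at h
      exact h
    have E31 : J 2 (Pi.single 0 1) 1 * J 3 (Pi.single 1 1) 1 = J 3 (Pi.single 0 1) 0 * J 2 (Pi.single 1 1) 1 := by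
      have h := hcomm (Pi.single ⟨1, by norm_num⟩ 1) ⟨3, by norm_num⟩
      simp only [tensAflip, tensA, unlexF, lexF, Fin.sum_univ_two, Fin.sum_univ_three,
        Pi.single_apply, Fin.mk.injEq] at h
      norm_num at h
      exact h
    have E33 : J 2 (Pi.single 1 1) 1 * J 3 (Pi.single 0 1) 1 = J 3 (Pi.single 1 1) 0 * J 2 (Pi.single 1 1) 1 := by
      have h := hcomm (Pi.single ⟨3, by norm_num⟩ 1) ⟨3, by norm_num⟩
      simp only [tensAflip, tensA, unlexF, lexF, Fin.sum_univ_two, Fin.sum_univ_three,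
        Pi.single_apply, Fin.mk.injEq] at h
      norm_num at h
      exact h
    have E15 : J 2 (Pi.single 1 1) 1 * J 3 (Pi.single 2 1) 0 = J 3 (Pi.single 2 1) 1 * J 2 (Pi.single 1 1) 0 := by
      have h := hcomm (Pi.single ⟨5, by norm_num⟩ 1) ⟨1, by norm_num⟩
      simp only [tensAflip, tensA, unlexF, lexF, Fin.sum_univ_two, Fin.sum_univ_three,
        Pi.single_apply, Fin.mk.injEq] at h
      norm_num at h
      exact h
    have E01 : J 2 (Pi.single 0 1) 0 * J 3 (Pi.single 1 1) 0 = J 3 (Pi.single 0 1) 0 * J 2 (Pi.single 1 1) 0 := by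
      have h := hcomm (Pi.single ⟨1, by norm_num⟩ 1) ⟨0, by norm_num⟩
      simp only [tensAflip, tensA, unlexF, lexF, Fin.sum_univ_two, Fin.sum_univ_three,
        Pi.single_apply, Fin.mk.injEq] at h
      norm_num at h
      exact h
    have E02 : J 2 (Pi.single 0 1) 0 * J 3 (Pi.single 2 1) 0 = J 3 (Pi.single 1 1) 0 * J 2 (Pi.single 0 1) 0 := by
      have h := hcomm (Pi.single ⟨2, by norm_num⟩ 1) ⟨0, by norm_num⟩
      simp only [tensAflip, tensA, unlexF, lexF, Fin.sum_univ_two, Fin.sum_univ_three,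
        Pi.single_apply, Fin.mk.injEq] at h
      norm_num at h
      exact h
    have E03 : J 2 (Pi.single 1 1) 0 * J 3 (Pi.single 0 1) 0 = J 3 (Pi.single 1 1) 0 * J 2 (Pi.single 1 1) 0 := by
      have h := hcomm (Pi.single ⟨3, by norm_num⟩ 1) ⟨0, by norm_num⟩
      simp only [tensAflip, tensA, unlexF, lexF, Fin.sum_univ_two, Fin.sum_univ_three,
        Pi.single_apply, Fin.mk.injEq] at h
      norm_num at h
      exact h
    have E20 : J 2 (Pi.single 0 1) 0 * J 3 (Pi.single 0 1) 1 = J 3 (Pi.single 0 1) 2 * J 2 (Pi.single 0 1) 0 := by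
      have h := hcomm (Pi.single ⟨0, by norm_num⟩ 1) ⟨2, by norm_num⟩
      simp only [tensAflip, tensA, unlexF, lexF, Fin.sum_univ_two, Fin.sum_univ_three,
        Pi.single_apply, Fin.mk.injEq] at h
      norm_num at h
      exact h
    have E21 : J 2 (Pi.single 0 1) 0 * J 3 (Pi.single 1 1) 1 = J 3 (Pi.single 0 1) 2 * J 2 (Pi.single 1 1) 0 := by
      have h := hcomm (Pi.single ⟨1, by norm_num⟩ 1) ⟨2, by norm_num⟩
      simp only [tensAflip, tensA, unlexF, lexF, Fin.sum_univ_two, Fin.sum_univ_three,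
        Pi.single_apply, Fin.mk.injEq] at h
      norm_num at h
      exact h
    have E22 : J 2 (Pi.single 0 1) 0 * J 3 (Pi.single 2 1) 1 = J 3 (Pi.single 1 1) 2 * J 2 (Pi.single 0 1) 0 := by
      have h := hcomm (Pi.single ⟨2, by norm_num⟩ 1) ⟨2, by norm_num⟩
      simp only [tensAflip, tensA, unlexF, lexF, Fin.sum_univ_two, Fin.sum_univ_three,
        Pi.single_apply, Fin.mk.injEq] at h
      norm_num at h
      exact h
    have E23 : J 2 (Pi.single 1 1) 0 * J 3 (Pi.single 0 1) 1 = J 3 (Pi.single 1 1) 2 * J 2 (Pi.single 1 1) 0 := by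
      have h := hcomm (Pi.single ⟨3, by norm_num⟩ 1) ⟨2, by norm_num⟩
      simp only [tensAflip, tensA, unlexF, lexF, Fin.sum_univ_two, Fin.sum_univ_three,
        Pi.single_apply, Fin.mk.injEq] at h
      norm_num at h
      exact h
    have E25 : J 2 (Pi.single 1 1) 0 * J 3 (Pi.single 2 1) 1 = J 3 (Pi.single 2 1) 2 * J 2 (Pi.single 1 1) 0 := by
      have h := hcomm (Pi.single ⟨5, by norm_num⟩ 1) ⟨2, by norm_num⟩
      simp only [tensAflip, tensA, unlexF, lexF, Fin.sum_univ_two, Fin.sum_univ_three,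
        Pi.single_apply, Fin.mk.injEq] at h
      norm_num at h
      exact h
    have C1 : conj (J 2 (Pi.single 0 1) 0) * J 2 (Pi.single 0 1) 0 +
        conj (J 2 (Pi.single 0 1) 1) * J 2 (Pi.single 0 1) 1 = 1 := by
      have h := hinner 2 (Pi.single 0 1) (Pi.single 0 1)
      simp only [Fin.sum_univ_two, Pi.single_apply] at h
      norm_num at h
      exact h
    have C2 : conj (J 2 (Pi.single 1 1) 0) * J 2 (Pi.single 1 1) 0 +
        conj (J 2 (Pi.single 1 1) 1) * J 2 (Pi.single 1 1) 1 = 1 := by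
      have h := hinner 2 (Pi.single 1 1) (Pi.single 1 1)
      simp only [Fin.sum_univ_two, Pi.single_apply] at h
      norm_num at h
      exact h
    have C3 : conj (J 2 (Pi.single 0 1) 0) * J 2 (Pi.single 1 1) 0 +
        conj (J 2 (Pi.single 0 1) 1) * J 2 (Pi.single 1 1) 1 = 0 := by
      have h := hinner 2 (Pi.single 0 1) (Pi.single 1 1)
      simp only [Fin.sum_univ_two, Pi.single_apply] at h
      norm_num at h
      exact h
    have key0 : (∀ l : Fin 3, J 3 (Pi.single l 1) 0 = 0) → False := by
      intro hb
      obtain ⟨v, hv⟩ := (hbij 3).2 (Pi.single 0 1)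
      have h1 := expandJ (J 3) (hadd 3) (hsmul 3) v 0
      rw [hv] at h1
      simp [hb] at h1
    have key12 : (∀ l : Fin 3, J 3 (Pi.single l 1) 1 = J 3 (Pi.single l 1) 2) → False := by
      intro hb
      obtain ⟨v, hv⟩ := (hbij 3).2 (Pi.single 1 1)
      have h1 := expandJ (J 3) (hadd 3) (hsmul 3) v 1
      have h2 := expandJ (J 3) (hadd 3) (hsmul 3) v 2
      rw [hv] at h1 h2
      simp only [hb] at h1
      rw [← h2] at h1
      simp at h1
    by_cases hA00 : J 2 (Pi.single 0 1) 0 = 0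
    · -- Case III: a00 = 0
      have ha10 : J 2 (Pi.single 0 1) 1 ≠ 0 := by
        intro h
        rw [hA00, h] at C1
        simp at C1
      have hb00 : J 3 (Pi.single 0 1) 0 = 0 := by
        have h : J 2 (Pi.single 0 1) 1 * J 3 (Pi.single 0 1) 0 = 0 := by
          rw [E10, hA00, mul_zero]
        exact (mul_eq_zero.mp h).resolve_left ha10
      have hb10 : J 3 (Pi.single 0 1) 1 = 0 := by
        have h : J 2 (Pi.single 0 1) 1 * J 3 (Pi.single 0 1) 1 = 0 := by
          rw [E30, hb00, zero_mul]
        exact (mul_eq_zero.mp h).resolve_left ha10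
      have hb01 : J 3 (Pi.single 1 1) 0 = 0 := by
        have h : J 2 (Pi.single 0 1) 1 * J 3 (Pi.single 1 1) 0 = 0 := by
          rw [E11, hb10, zero_mul]
        exact (mul_eq_zero.mp h).resolve_left ha10
      have hb02 : J 3 (Pi.single 2 1) 0 = 0 := by
        have h : J 2 (Pi.single 0 1) 1 * J 3 (Pi.single 2 1) 0 = 0 := by
          rw [E12, hA00, mul_zero]
        exact (mul_eq_zero.mp h).resolve_left ha10
      exact key0 (by intro l; fin_cases l <;> assumption)
    · by_cases hA01 : J 2 (Pi.single 1 1) 0 = 0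
      · -- Case II: a00 ≠ 0, a01 = 0 (hence a10 = 0, a11 ≠ 0)
        have ha11 : J 2 (Pi.single 1 1) 1 ≠ 0 := by
          intro h
          rw [hA01, h] at C2
          simp at C2
        have ha10 : J 2 (Pi.single 0 1) 1 = 0 := by
          rw [hA01, mul_zero, zero_add] at C3
          rcases mul_eq_zero.mp C3 with h | h
          · simpa using h
          · exact absurd h ha11
        have hb10 : J 3 (Pi.single 0 1) 1 = 0 := by
          have h : J 3 (Pi.single 0 1) 1 * J 2 (Pi.single 0 1) 0 = 0 := by
            rw [← E10, ha10, zero_mul]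
          exact (mul_eq_zero.mp h).resolve_right hA00
        have hb00 : J 3 (Pi.single 0 1) 0 = 0 := by
          have h : J 3 (Pi.single 0 1) 0 * J 2 (Pi.single 1 1) 1 = 0 := by
            rw [← E31, ha10, zero_mul]
          exact (mul_eq_zero.mp h).resolve_right ha11
        have hb01 : J 3 (Pi.single 1 1) 0 = 0 := by
          have h : J 3 (Pi.single 1 1) 0 * J 2 (Pi.single 1 1) 1 = 0 := by
            rw [← E33, hb10, mul_zero]
          exact (mul_eq_zero.mp h).resolve_right ha11
        have hb02 : J 3 (Pi.single 2 1) 0 = 0 := by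
          have h : J 2 (Pi.single 1 1) 1 * J 3 (Pi.single 2 1) 0 = 0 := by
            rw [E15, hA01, mul_zero]
          exact (mul_eq_zero.mp h).resolve_left ha11
        exact key0 (by intro l; fin_cases l <;> assumption)
      · -- Case I: a00 ≠ 0, a01 ≠ 0
        have hb0001 : J 3 (Pi.single 0 1) 0 = J 3 (Pi.single 1 1) 0 :=
          mul_left_cancel₀ hA01 (by linear_combination E03)
        have hb0201 : J 3 (Pi.single 2 1) 0 = J 3 (Pi.single 1 1) 0 :=
          mul_left_cancel₀ hA00 (by linear_combination E02)
        by_cases hb01 : J 3 (Pi.single 1 1) 0 = 0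
        · refine key0 ?_
          intro l
          fin_cases l
          · exact hb0001.trans hb01
          · exact hb01
          · exact hb0201.trans hb01
        · have haa : J 2 (Pi.single 0 1) 0 = J 2 (Pi.single 1 1) 0 :=
            mul_right_cancel₀ hb01 (by linear_combination E01 + J 2 (Pi.single 1 1) 0 * hb0001)
          have h20 : J 3 (Pi.single 0 1) 2 = J 3 (Pi.single 0 1) 1 :=
            mul_left_cancel₀ hA00 (by linear_combination -E20)
          have h21 : J 3 (Pi.single 1 1) 2 = J 3 (Pi.single 0 1) 1 :=
            mul_left_cancel₀ hA01 (by linear_combination -E23)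
          have h12 : J 3 (Pi.single 2 1) 1 = J 3 (Pi.single 0 1) 1 :=
            mul_left_cancel₀ hA00 (by linear_combination E22 + J 2 (Pi.single 0 1) 0 * h21)
          have h11 : J 3 (Pi.single 1 1) 1 = J 3 (Pi.single 0 1) 1 :=
            mul_left_cancel₀ hA00 (by
              linear_combination E21 + J 2 (Pi.single 1 1) 0 * h20 -
                J 3 (Pi.single 0 1) 1 * haa)
          have h22 : J 3 (Pi.single 2 1) 2 = J 3 (Pi.single 0 1) 1 :=
            mul_left_cancel₀ hA01 (by linear_combination -E25 + J 2 (Pi.single 1 1) 0 * h12)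
          refine key12 ?_
          intro l
          fin_cases l
          · exact h20.symm
          · exact h11.trans h21.symm
          · exact h12.trans h22.symm
  · -- part (b): basic properties of Jrev
    intro m
    refine ⟨fun v w => ?_, fun c v => ?_, fun v => ?_, fun v w => ?_⟩
    · funext i; simp [Jrev]
    · funext i; simp [Jrev, Pi.smul_apply, smul_eq_mul, map_mul]
    · funext i; simp [Jrev, Fin.rev_rev]
    · rw [← Equiv.sum_comp Fin.revPerm (fun i => conj (w i) * v i)]
      refine Finset.sum_congr rfl fun i _ => ?_
      simp only [Jrev, Fin.revPerm_apply]
      rw [Complex.conj_conj]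
      ring
  · -- part (b): tensor product identities
    intro m n v u
    constructor
    · rw [tensA_Jrev]
      show conj (v (lexF ((unlexF u).1.rev, (unlexF u).2.rev))) = _
      rw [idxlem]
      rfl
    · rw [tensA_Jrev]
      show conj (v (Fin.cast (Nat.mul_comm n m)
        (lexF ((unlexF (Fin.cast (Nat.mul_comm m n) u)).1.rev,
               (unlexF (Fin.cast (Nat.mul_comm m n) u)).2.rev)))) = _
      rw [idxlem]
      have hc : Fin.cast (Nat.mul_comm n m) (Fin.cast (Nat.mul_comm m n) u).rev = u.rev := by
        apply Fin.ext
        simp [Fin.val_rev, Nat.mul_comm]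
      rw [hc]
      rfl
end

section
/- Let s and f = s' be an Hermitian pair of semilinear maps between dense subspaces of Hilbert spaces (so f ⊆ s*), and suppose s's and ff' form an essentially self-adjoint pair. Then the closure of s̄' ∘ s̄ equals the closure of s's, where s̄, s̄' denote the closures of s, s'. -/
open scoped InnerProductSpace

/-- The graph of the composite `t ∘ s` of two partially defined operators
`s : D(s) ⊆ H → K` and `t : D(t) ⊆ K → H`, as a set of pairs. -/
def compGraph {H K : Type*}
    [NormedAddCommGroup H] [InnerProductSpace ℂ H]
    [NormedAddCommGroup K] [InnerProductSpace ℂ K]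
    (s : H →ₗ.[ℂ] K) (t : K →ₗ.[ℂ] H) : Set (H × H) :=
  {p : H × H | ∃ k : K, (p.1, k) ∈ s.graph ∧ (k, p.2) ∈ t.graph}

/-- Let `s` and `f = s' = t` be an Hermitian pair of densely defined maps between
dense subspaces of Hilbert spaces (so `f ⊆ s*`), and suppose the pair
`(s's, ff') = (t∘s, t∘s)` is essentially self-adjoint, i.e. the adjoint of `t∘s`
equals its closure.  Then the closure of `t̄ ∘ s̄` (composite of the closures)
equals the closure of `t ∘ s`. -/
theorem closure_of_composite_of_hermitian_pair
    {H K : Type*}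
    [NormedAddCommGroup H] [InnerProductSpace ℂ H] [CompleteSpace H]
    [NormedAddCommGroup K] [InnerProductSpace ℂ K] [CompleteSpace K]
    (s : H →ₗ.[ℂ] K) (t : K →ₗ.[ℂ] H)
    (hs_dom : Dense (s.domain : Set H))
    (ht_dom : Dense (t.domain : Set K))
    (hs_closable : s.IsClosable) (ht_closable : t.IsClosable)
    -- the Hermitian pair condition: `t = s' ⊆ s*`
    (hherm : ∀ (h : s.domain) (k : t.domain), ⟪t k, (h : H)⟫_ℂ = ⟪(k : K), s h⟫_ℂ)
    -- essential self-adjointness of the pair `(s's, ff')`: `(t∘s)* = closure (t∘s)`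
    (hess : {q : H × H | ∀ p ∈ compGraph s t, ⟪q.1, p.2⟫_ℂ = ⟪q.2, p.1⟫_ℂ} =
      closure (compGraph s t)) :
    closure (compGraph s.closure t.closure) = closure (compGraph s t) := by
  -- coercion of closure graphs
  have hsg : (s.closure.graph : Set (H × K)) = closure (s.graph : Set (H × K)) := by
    rw [← hs_closable.graph_closure_eq_closure_graph, Submodule.topologicalClosure_coe]
  have htg : (t.closure.graph : Set (K × H)) = closure (t.graph : Set (K × H)) := by
    rw [← ht_closable.graph_closure_eq_closure_graph, Submodule.topologicalClosure_coe]
  -- Lemma A : extend Hermitian relation along the closure of s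
  have A : ∀ (m : t.domain) (h : H) (k : K), (h, k) ∈ s.closure.graph →
      ⟪t m, h⟫_ℂ = ⟪(m : K), k⟫_ℂ := by
    intro m h k hk
    have hmem : (h, k) ∈ closure (s.graph : Set (H × K)) := by rw [← hsg]; exact hk
    have hclosed : IsClosed {p : H × K | ⟪t m, p.1⟫_ℂ = ⟪(m : K), p.2⟫_ℂ} :=
      isClosed_eq (continuous_const.inner continuous_fst)
        (continuous_const.inner continuous_snd)
    have hsub : (s.graph : Set (H × K)) ⊆ {p : H × K | ⟪t m, p.1⟫_ℂ = ⟪(m : K), p.2⟫_ℂ} := by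
      rintro ⟨a, b⟩ hab
      rw [SetLike.mem_coe, LinearPMap.mem_graph_iff] at hab
      obtain ⟨y, hy1, hy2⟩ := hab
      simp only [Set.mem_setOf_eq] at *
      subst hy1; subst hy2
      exact hherm y m
    exact closure_minimal hsub hclosed hmem
  -- Lemma B : extend Hermitian relation along the closure of t
  have B : ∀ (x : s.domain) (k : K) (h' : H), (k, h') ∈ t.closure.graph →
      ⟪h', (x : H)⟫_ℂ = ⟪k, s x⟫_ℂ := by
    intro x k h' hk
    have hmem : (k, h') ∈ closure (t.graph : Set (K × H)) := by rw [← htg]; exact hk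
    have hclosed : IsClosed {p : K × H | ⟪p.2, (x : H)⟫_ℂ = ⟪p.1, s x⟫_ℂ} :=
      isClosed_eq ((continuous_snd.inner continuous_const))
        ((continuous_fst.inner continuous_const))
    have hsub : (t.graph : Set (K × H)) ⊆ {p : K × H | ⟪p.2, (x : H)⟫_ℂ = ⟪p.1, s x⟫_ℂ} := by
      rintro ⟨a, b⟩ hab
      rw [SetLike.mem_coe, LinearPMap.mem_graph_iff] at hab
      obtain ⟨y, hy1, hy2⟩ := hab
      simp only [Set.mem_setOf_eq] at *
      subst hy1; subst hy2
      exact hherm x y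
    exact closure_minimal hsub hclosed hmem
  apply subset_antisymm
  · -- closure (compGraph s̄ t̄) ⊆ closure (compGraph s t)
    refine closure_minimal ?_ isClosed_closure
    rw [← hess]
    rintro ⟨h, h'⟩ ⟨k, hks, hkt⟩ ⟨x, z⟩ ⟨m, hms, hmt⟩
    -- p = (x, z) with m = s x ∈ dom t, z = t m
    rw [LinearPMap.mem_graph_iff] at hms hmt
    obtain ⟨y, hy1, hy2⟩ := hms
    obtain ⟨w, hw1, hw2⟩ := hmt
    simp only at *
    subst hy1; subst hy2; subst hw2
    have h1 : ⟪t w, h⟫_ℂ = ⟪(w : K), k⟫_ℂ := A w h k hks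
    have h2 : ⟪h', (y : H)⟫_ℂ = ⟪k, (w : K)⟫_ℂ := by
      rw [B y k h' hkt, hw1]
    have h3 : ⟪h, t w⟫_ℂ = ⟪k, (w : K)⟫_ℂ := by
      rw [← inner_conj_symm, h1, inner_conj_symm]
    rw [h3, h2]
  · -- compGraph s t ⊆ compGraph s̄ t̄
    apply closure_mono
    rintro ⟨h, h'⟩ ⟨k, hks, hkt⟩
    exact ⟨k, LinearPMap.le_graph_of_le s.le_closure hks,
      LinearPMap.le_graph_of_le t.le_closure hkt⟩
end

section
/- Let V be a multiplicative unitary on K ⊗ K, W a corepresentation of V on H, and W̄ a unitary on K ⊗ H̄ for which there exists a densely defined closed antilinear invertible operator T: H → H̄ with (ω ⊗ ι)(W̄) T ⊆ T (ω̄ ⊗ ι)(W) for all ω ∈ B(K)_*. Then W̄ is itself a corepresentation of V. -/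
open scoped Matrix

noncomputable def leg12 {α β γ : Type*} [DecidableEq γ]
    (X : Matrix (α × β) (α × β) ℂ) : Matrix (α × β × γ) (α × β × γ) ℂ :=
  fun p q => X (p.1, p.2.1) (q.1, q.2.1) * (if p.2.2 = q.2.2 then 1 else 0)

noncomputable def leg13 {α β γ : Type*} [DecidableEq β]
    (X : Matrix (α × γ) (α × γ) ℂ) : Matrix (α × β × γ) (α × β × γ) ℂ :=
  fun p q => X (p.1, p.2.2) (q.1, q.2.2) * (if p.2.1 = q.2.1 then 1 else 0)

noncomputable def leg23 {α β γ : Type*} [DecidableEq α]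
    (X : Matrix (β × γ) (β × γ) ℂ) : Matrix (α × β × γ) (α × β × γ) ℂ :=
  fun p q => X (p.2.1, p.2.2) (q.2.1, q.2.2) * (if p.1 = q.1 then 1 else 0)

/-- The slice map `(ω ⊗ ι)(X)` for the normal functional `ω = tr(ρ ·)` on `B(K)`. -/
noncomputable def sliceMap {ι a b : Type*} [Fintype ι]
    (ρ : Matrix ι ι ℂ) (X : Matrix (ι × a) (ι × b) ℂ) : Matrix a b ℂ :=
  fun x y => ∑ k, ∑ k', ρ k' k * X (k, x) (k', y)

noncomputable def blk {κ a : Type*} (X : Matrix (κ × a) (κ × a) ℂ) (p q : κ) :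
    Matrix a a ℂ := Matrix.of fun u v => X (p, u) (q, v)

section
variable {α β γ : Type*} [Fintype α] [Fintype β] [Fintype γ]
  [DecidableEq α] [DecidableEq β] [DecidableEq γ]

set_option linter.unusedSectionVars false

lemma leg12_mul (X Y : Matrix (α × β) (α × β) ℂ) :
    leg12 (X * Y) = (leg12 X * leg12 Y : Matrix (α × β × γ) (α × β × γ) ℂ) := by
  ext ⟨a, b, z⟩ ⟨a', b', z'⟩
  simp [leg12, Matrix.mul_apply, Fintype.sum_prod_type, mul_ite, ite_mul,
    mul_zero, zero_mul, mul_one, one_mul, Finset.sum_ite_eq, Finset.sum_ite_eq',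
    Finset.sum_mul, Finset.mul_sum]

lemma leg12_one :
    leg12 (1 : Matrix (α × β) (α × β) ℂ) = (1 : Matrix (α × β × γ) (α × β × γ) ℂ) := by
  ext ⟨a, b, z⟩ ⟨a', b', z'⟩
  simp only [leg12, Matrix.one_apply, Prod.ext_iff, ite_and, mul_ite, mul_one, mul_zero]
  split_ifs <;> simp_all

end

section
variable {ι h' : Type*} [Fintype ι] [DecidableEq ι] [Fintype h'] [DecidableEq h']

set_option linter.unusedSectionVars false

lemma l13_l23_apply (X : Matrix (ι × h') (ι × h') ℂ) (i j i' j' : ι) (u v : h') :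
    (leg13 X * leg23 X : Matrix (ι × ι × h') (ι × ι × h') ℂ) (i, j, u) (i', j', v)
      = (blk X i i' * blk X j j') u v := by
  simp [leg13, leg23, blk, Matrix.mul_apply, Fintype.sum_prod_type, mul_ite, ite_mul,
    mul_zero, zero_mul, mul_one, one_mul, Finset.sum_ite_eq, Finset.sum_ite_eq']

lemma big_apply (V : Matrix (ι × ι) (ι × ι) ℂ) (X : Matrix (ι × h') (ι × h') ℂ)
    (i j i' j' : ι) (u v : h') :
    (leg12 (star V) * (leg23 X * leg12 V) : Matrix (ι × ι × h') (ι × ι × h') ℂ)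
        (i, j, u) (i', j', v)
      = (∑ a, ∑ b, ∑ b',
          ((starRingEnd ℂ) (V (a, b) (i, j)) * V (a, b') (i', j')) • blk X b b') u v := by
  simp [leg12, leg23, blk, Matrix.mul_apply, Matrix.sum_apply, Matrix.smul_apply,
    Matrix.star_apply, Fintype.sum_prod_type, mul_ite, ite_mul,
    mul_zero, zero_mul, mul_one, one_mul, Finset.sum_ite_eq, Finset.sum_ite_eq',
    Finset.mul_sum, Finset.sum_mul, smul_eq_mul, mul_comm, mul_left_comm, mul_assoc]

lemma corep_iff (V : Matrix (ι × ι) (ι × ι) ℂ) (hVu : V ∈ Matrix.unitaryGroup (ι × ι) ℂ)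
    (X : Matrix (ι × h') (ι × h') ℂ) :
    leg12 V * leg13 X * leg23 X = leg23 X * leg12 V ↔
      ∀ i j i' j', blk X i i' * blk X j j'
        = ∑ a, ∑ b, ∑ b',
            ((starRingEnd ℂ) (V (a, b) (i, j)) * V (a, b') (i', j')) • blk X b b' := by
  have h1 : (leg12 (star V) * leg12 V : Matrix (ι × ι × h') (ι × ι × h') ℂ) = 1 := by
    rw [← leg12_mul, hVu.1, leg12_one]
  have h2 : (leg12 V * leg12 (star V) : Matrix (ι × ι × h') (ι × ι × h') ℂ) = 1 := by
    rw [← leg12_mul, hVu.2, leg12_one]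
  have key : (leg12 V * leg13 X * leg23 X = leg23 X * leg12 V) ↔
      (leg13 X * leg23 X = leg12 (star V) * (leg23 X * leg12 V)) := by
    constructor
    · intro hE
      calc leg13 X * leg23 X
          = (leg12 (star V) * leg12 V) * leg13 X * leg23 X := by rw [h1, one_mul]
        _ = leg12 (star V) * (leg12 V * leg13 X * leg23 X) := by
            simp only [mul_assoc]
        _ = leg12 (star V) * (leg23 X * leg12 V) := by rw [hE]
    · intro hE
      calc leg12 V * leg13 X * leg23 X
          = leg12 V * (leg13 X * leg23 X) := by rw [mul_assoc]
        _ = leg12 V * (leg12 (star V) * (leg23 X * leg12 V)) := by rw [hE]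
        _ = (leg12 V * leg12 (star V)) * (leg23 X * leg12 V) := by rw [mul_assoc]
        _ = leg23 X * leg12 V := by rw [h2, one_mul]
  rw [key]
  constructor
  · intro hE i j i' j'
    ext u v
    have := Matrix.ext_iff.mpr hE (i, j, u) (i', j', v)
    rwa [l13_l23_apply, big_apply] at this
  · intro hE
    ext ⟨i, j, u⟩ ⟨i', j', v⟩
    rw [l13_l23_apply, big_apply, hE i j i' j']

end

/-- Let `V` be a multiplicative unitary on `K ⊗ K`, `W` a corepresentation of `V` on
`H`, and `W̄` a unitary on `K ⊗ H̄` for which there is a (closed, invertible)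
antilinear operator `T : H → H̄` with `(ω ⊗ ι)(W̄) T = T (ω̄ ⊗ ι)(W)` for all
`ω ∈ B(K)_*`.  (Antilinear operators are written `T = T₀ ∘ conj` with `T₀`
an invertible matrix; `ω = tr(ρ ·)` has `ω̄ = tr(ρ* ·)`, and conjugating an
operator by the coordinate conjugation replaces its matrix by its entrywise
conjugate.)  Then `W̄` is itself a corepresentation of `V`. -/
theorem conjugate_of_corepresentation_is_corepresentation
    {ι h hb : Type*} [Fintype ι] [DecidableEq ι] [Fintype h] [DecidableEq h]
    [Fintype hb] [DecidableEq hb]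
    (V : Matrix (ι × ι) (ι × ι) ℂ)
    (hVu : V ∈ Matrix.unitaryGroup (ι × ι) ℂ)
    (hpent : leg12 V * leg13 V * leg23 V = leg23 V * leg12 V)
    (W : Matrix (ι × h) (ι × h) ℂ)
    (hWu : W ∈ Matrix.unitaryGroup (ι × h) ℂ)
    (hW : leg12 V * leg13 W * leg23 W = leg23 W * leg12 V)
    (Wb : Matrix (ι × hb) (ι × hb) ℂ)
    (hWbu : Wb ∈ Matrix.unitaryGroup (ι × hb) ℂ)
    (T₀ : Matrix hb h ℂ)
    (hT₀ : ∃ T₁ : Matrix h hb ℂ, T₀ * T₁ = 1 ∧ T₁ * T₀ = 1)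
    (hT : ∀ ρ : Matrix ι ι ℂ,
      sliceMap ρ Wb * T₀ = T₀ * (sliceMap (star ρ) W).map (starRingEnd ℂ)) :
    leg12 V * leg13 Wb * leg23 Wb = leg23 Wb * leg12 V := by
  classical
  obtain ⟨T₁, hT01, hT10⟩ := hT₀
  set c := starRingEnd ℂ with hc
  -- transport the slice relation to blocks
  have hblk : ∀ p q, blk Wb q p = T₀ * (blk W p q).map c * T₁ := by
    intro p q
    have hmain := hT (Matrix.of fun k' k => if k' = p ∧ k = q then (1 : ℂ) else 0)
    have hs : sliceMap (Matrix.of fun k' k => if k' = p ∧ k = q then (1 : ℂ) else 0) Wb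
        = blk Wb q p := by
      ext x y
      simp [sliceMap, blk, ite_and, ite_mul, zero_mul, one_mul,
        Finset.sum_ite_eq, Finset.sum_ite_eq']
    have hs' : sliceMap (star (Matrix.of fun k' k => if k' = p ∧ k = q then (1 : ℂ) else 0)) W
        = blk W p q := by
      ext x y
      simp [sliceMap, blk, Matrix.star_apply, ite_and, apply_ite, ite_mul, zero_mul, one_mul,
        Finset.sum_ite_eq, Finset.sum_ite_eq']
    rw [hs, hs'] at hmain
    calc blk Wb q p = blk Wb q p * (T₀ * T₁) := by rw [hT01, mul_one]
      _ = (blk Wb q p * T₀) * T₁ := by rw [Matrix.mul_assoc]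
      _ = T₀ * (blk W p q).map c * T₁ := by rw [hmain]
  have cW := (corep_iff V hVu W).mp hW
  rw [corep_iff V hVu Wb]
  intro i j i' j'
  have hmapsum : ∀ {σ : Type _} [Fintype σ] (f : σ → Matrix h h ℂ),
      (∑ x, f x).map c = ∑ x, (f x).map c := by
    intro σ _ f
    ext u v
    simp [Matrix.map_apply, Matrix.sum_apply]
  have hmapsmul : ∀ (r : ℂ) (M : Matrix h h ℂ), (r • M).map c = c r • M.map c := by
    intro r M
    ext u v
    simp [Matrix.map_apply, Matrix.smul_apply, smul_eq_mul, map_mul]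
  calc blk Wb i i' * blk Wb j j'
      = (T₀ * (blk W i' i).map c * T₁) * (T₀ * (blk W j' j).map c * T₁) := by
        rw [hblk i' i, hblk j' j]
    _ = T₀ * ((blk W i' i * blk W j' j).map c) * T₁ := by
        rw [Matrix.map_mul]
        simp only [Matrix.mul_assoc]
        rw [← Matrix.mul_assoc T₁ T₀, hT10, Matrix.one_mul]
    _ = T₀ * ((∑ a, ∑ b, ∑ b', (c (V (a, b) (i', j')) * V (a, b') (i, j)) • blk W b b').map c)
          * T₁ := by rw [cW i' j' i j]
    _ = ∑ a, ∑ b, ∑ b', (V (a, b) (i', j') * c (V (a, b') (i, j)))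
          • (T₀ * (blk W b b').map c * T₁) := by
        rw [hmapsum]
        simp only [hmapsum, hmapsmul, map_mul, Complex.conj_conj, Finset.mul_sum,
          Finset.sum_mul, Matrix.mul_smul, Matrix.smul_mul]
        simp only [hc, Complex.conj_conj, Finset.mul_sum, Finset.sum_mul,
          Matrix.mul_smul, Matrix.smul_mul, Matrix.mul_assoc, Matrix.mul_sum, Matrix.sum_mul]
    _ = ∑ a, ∑ b, ∑ b', (V (a, b) (i', j') * c (V (a, b') (i, j))) • blk Wb b' b := by
        simp_rw [← hblk]
    _ = ∑ a, ∑ b, ∑ b', (c (V (a, b) (i, j)) * V (a, b') (i', j')) • blk Wb b b' := by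
        refine Finset.sum_congr rfl fun a _ => ?_
        conv_lhs => rw [Finset.sum_comm]
        exact Finset.sum_congr rfl fun b _ => Finset.sum_congr rfl fun b' _ => by
          rw [mul_comm]
end
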